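/- Let M be a module over a filtered ring D with a good exhaustive increasing filtration F_•M such that F_p M = 0 for p sufficiently negative (locally). Suppose that for each p ≤ m the p-th graded de Rham-type complex gr^F_p DR(M), whose terms in degrees −d,…,0 are gr^F_{p}M, Ω^1⊗gr^F_{p+1}M, …, Ω^d⊗gr^F_{p+d}M, is acyclic. Then F_{m+d} M = 0. -/

import Mathlib

/-!
STATEMENT 5: Let `M` be a module over the ring `D` of differential operators on a
`d`-dimensional complex manifold, with a good exhaustive increasing filtration `F_• M` which is
(locally) bounded below.  Suppose that for each `p ≤ m` the `p`-th graded de-Rham-type complex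
`gr^F_p DR(M)`, whose term in degree `i` (for `-d ≤ i ≤ 0`) is `Ω^{i+d} ⊗ gr^F_{p+i+d} M`,
is acyclic.  Then `F_{m+d} M = 0`.

We work over a commutative base ring `R` (the functions), with the filtration given by
`R`-submodules `F p ≤ M`; `gr^F_q M` is the quotient `F q / F (q-1)`, and the graded de Rham
complexes are cochain complexes `C p` of `R`-modules whose terms are identified with
`Ω^{i+d} ⊗ gr^F_{p+i+d} M` (the sheaves `Ω^k` of `k`-forms being finite free, with `Ω^d ≠ 0`).
-/

open CategoryTheory TensorProduct

/-- A zero object of `ModuleCat` has subsingleton carrier. -/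
lemma stmt5_subsingleton_of_isZero {R : Type} [CommRing R] {X : ModuleCat R}
    (h : Limits.IsZero X) : Subsingleton X := by
  have h1 : (𝟙 X : X ⟶ X) = 0 := h.eq_of_src _ _
  refine subsingleton_of_forall_eq 0 fun x => ?_
  have := congrArg (fun f : X ⟶ X => f.hom x) h1
  simpa using this

lemma stmt5_tensor_subsingleton {R A N : Type} [CommRing R] [AddCommGroup A] [Module R A]
    [AddCommGroup N] [Module R N] (h : Subsingleton N) : Subsingleton (A ⊗[R] N) := by
  refine subsingleton_of_forall_eq 0 fun x => ?_
  induction x using TensorProduct.induction_on with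
  | zero => rfl
  | tmul a n => rw [Subsingleton.elim n 0, tmul_zero]
  | add x y hx hy => rw [hx, hy, add_zero]

lemma stmt5_cancel {R A N : Type} [CommRing R] [AddCommGroup A] [Module R A]
    [Module.Free R A] [Nontrivial A]
    [AddCommGroup N] [Module R N] (h : Subsingleton (A ⊗[R] N)) : Subsingleton N := by
  let b := Module.Free.chooseBasis R A
  obtain ⟨i⟩ := b.index_nonempty
  have e : (A ⊗[R] N) ≃ₗ[R] (Module.Free.ChooseBasisIndex R A →₀ N) :=
    (TensorProduct.congr b.repr (LinearEquiv.refl R N)).trans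
      (TensorProduct.finsuppScalarLeft R N _)
  have hfs : Subsingleton (Module.Free.ChooseBasisIndex R A →₀ N) :=
    e.toEquiv.subsingleton_congr.mp h
  refine subsingleton_of_forall_eq 0 fun n => ?_
  have := Subsingleton.elim (Finsupp.single i n) 0
  rwa [Finsupp.single_eq_zero] at this

theorem stmt5 (R : Type) [CommRing R]
    (M : Type) [AddCommGroup M] [Module R M]
    (F : ℤ → Submodule R M)
    (hmono : Monotone F)
    (hexh : ⨆ p : ℤ, F p = ⊤)
    (hbelow : ∃ p₀ : ℤ, F p₀ = ⊥)
    (d : ℕ)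
    (Ω : ℕ → Type) [∀ k, AddCommGroup (Ω k)] [∀ k, Module R (Ω k)]
    [∀ k, Module.Free R (Ω k)] [∀ k, Module.Finite R (Ω k)]
    (hΩd : Nontrivial (Ω d))
    -- `C p` is the complex `gr^F_p DR(M)`, concentrated in degrees `-d, …, 0`:
    (C : ℤ → CochainComplex (ModuleCat R) ℤ)
    (hterm : ∀ p i : ℤ, -(d : ℤ) ≤ i → i ≤ 0 →
      Nonempty (((C p).X i) ≅ ModuleCat.of R
        (Ω (i + d).toNat ⊗[R]
          (↥(F (p + i + d)) ⧸ Submodule.comap (F (p + i + d)).subtype (F (p + i + d - 1))))))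
    (hzero : ∀ p i : ℤ, (i < -(d : ℤ) ∨ 0 < i) → Limits.IsZero ((C p).X i))
    (m : ℤ)
    -- acyclicity of `gr^F_p DR(M)` for all `p ≤ m`:
    (hacy : ∀ p : ℤ, p ≤ m → ∀ i : ℤ, (C p).ExactAt i) :
    F (m + d) = ⊥ := by
  obtain ⟨p₀, hp₀⟩ := hbelow
  -- key induction: all graded pieces `gr^F_q M` with `q ≤ m + d` vanish
  have key : ∀ n : ℕ, ∀ q : ℤ, q ≤ m + d → (q - p₀).toNat ≤ n → F q ≤ F (q - 1) := by
    intro n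
    induction n with
    | zero =>
      intro q _ hn
      have hq0 : q ≤ p₀ := by omega
      calc F q ≤ F p₀ := hmono hq0
        _ = ⊥ := hp₀
        _ ≤ F (q - 1) := bot_le
    | succ n ih =>
      intro q hq hn
      by_cases hcase : q ≤ p₀
      · calc F q ≤ F p₀ := hmono hcase
          _ = ⊥ := hp₀
          _ ≤ F (q - 1) := bot_le
      · set p : ℤ := q - d with hpdef
        have hpm : p ≤ m := by omega
        -- all graded pieces appearing in negative degrees of `C p` vanish by induction
        have hgr : ∀ i : ℤ, -(d : ℤ) ≤ i → i < 0 →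
            Subsingleton (↥(F (p + i + d)) ⧸
              Submodule.comap (F (p + i + d)).subtype (F (p + i + d - 1))) := by
          intro i hi1 hi2
          have h1 : p + i + d ≤ m + d := by omega
          have h2 : ((p + i + d) - p₀).toNat ≤ n := by omega
          rw [Submodule.Quotient.subsingleton_iff, Submodule.comap_subtype_eq_top]
          exact ih (p + i + d) h1 h2
        -- hence all terms of `C p` in nonzero degrees are zero
        have hX : ∀ i : ℤ, i ≠ 0 → Limits.IsZero ((C p).X i) := by
          intro i hi
          by_cases hrange : -(d : ℤ) ≤ i ∧ i ≤ 0
          · obtain ⟨e⟩ := hterm p i hrange.1 hrange.2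
            have hsub := hgr i hrange.1 (lt_of_le_of_ne hrange.2 hi)
            have : Subsingleton (Ω (i + d).toNat ⊗[R]
                (↥(F (p + i + d)) ⧸
                  Submodule.comap (F (p + i + d)).subtype (F (p + i + d - 1)))) :=
              stmt5_tensor_subsingleton hsub
            exact (ModuleCat.isZero_of_subsingleton _).of_iso e
          · exact hzero p i (by omega)
        -- exactness at degree 0
        have hprev : (ComplexShape.up ℤ).prev 0 = -1 := by
          rw [CochainComplex.prev]; norm_num
        have hnext : (ComplexShape.up ℤ).next 0 = 1 := by
          rw [CochainComplex.next]; norm_num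
        have hex : ((C p).sc' (-1) 0 1).Exact :=
          (HomologicalComplex.exactAt_iff' (C p) (-1) 0 1 hprev hnext).mp (hacy p hpm 0)
        have hf0 : ((C p).sc' (-1) 0 1).f = 0 := (hX (-1) (by norm_num)).eq_of_src _ _
        have hg0 : ((C p).sc' (-1) 0 1).g = 0 := (hX 1 one_ne_zero).eq_of_tgt _ _
        have h0 : Limits.IsZero ((C p).X 0) := hex.isZero_X₂ hf0 hg0
        -- identify `X 0` with `Ω^d ⊗ gr^F_q M`
        obtain ⟨e⟩ := hterm p 0 (by omega) le_rfl
        have hT : Subsingleton (Ω ((0 : ℤ) + d).toNat ⊗[R]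
            (↥(F (p + 0 + d)) ⧸
              Submodule.comap (F (p + 0 + d)).subtype (F (p + 0 + d - 1)))) :=
          stmt5_subsingleton_of_isZero (h0.of_iso e.symm)
        have hd : ((0 : ℤ) + d).toNat = d := by omega
        rw [hd] at hT
        have hq' : Subsingleton
            (↥(F (p + 0 + d)) ⧸
              Submodule.comap (F (p + 0 + d)).subtype (F (p + 0 + d - 1))) :=
          stmt5_cancel hT
        have hqeq : p + 0 + (d : ℤ) = q := by omega
        rw [hqeq] at hq'
        rw [Submodule.Quotient.subsingleton_iff,
          Submodule.comap_subtype_eq_top] at hq'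
        exact hq'
  -- now descend from `m + d` down to `p₀`
  have chain : ∀ k : ℕ, F (m + d) ≤ F (m + d - k) := by
    intro k
    induction k with
    | zero => simp
    | succ k ih =>
      refine ih.trans ?_
      have := key (m + d - k - p₀).toNat (m + d - k) (by omega) le_rfl
      have heq : m + (d : ℤ) - k - 1 = m + d - (k + 1 : ℕ) := by push_cast; ring
      rw [heq] at this
      exact this
  refine le_bot_iff.mp ?_
  calc F (m + d) ≤ F (m + d - (m + d - p₀).toNat) := chain _
    _ ≤ F p₀ := hmono (by omega)
    _ = ⊥ := hp₀
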